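/- Let z ∈ ℂ with |z| = 1, let x₀, x₁ be integers with 0 < x₀ < x₁, and let C⁰, C¹, C² be 2×2 unitary complex matrices. Define 𝚊(z) = z^{x₁+1} − C¹₂₁C²₁₂ z^{2x₀−x₁+1} − C⁰₂₁C¹₁₂ z^{x₁−2x₀+1} − C⁰₂₁C²₁₂ (det C¹) z^{−x₁+1} and 𝚋(z) = C²₂₁ z^{x₁} + C¹₂₁ (det C²) z^{2x₀−x₁} − C⁰₂₁C¹₁₂C²₂₁ z^{x₁−2x₀} + C⁰₂₁ (det C¹)(det C²) z^{−x₁}. Then |𝚊(z)|² = |C⁰₁₁ C¹₁₁ C²₁₁|² + |𝚋(z)|². -/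

import Mathlib

open Matrix

lemma unit_facts17 (C : Matrix (Fin 2) (Fin 2) ℂ) (hC : C ∈ Matrix.unitaryGroup (Fin 2) ℂ) :
    C 0 0 * (starRingEnd ℂ) (C 0 0) + C 1 0 * (starRingEnd ℂ) (C 1 0) = 1 ∧
    C 0 1 = -(starRingEnd ℂ) (C 1 0) * C.det ∧
    C.det * (starRingEnd ℂ) C.det = 1 := by
  have h := hC.1
  have h00 := congr_fun (congr_fun h 0) 0
  have h01 := congr_fun (congr_fun h 0) 1
  simp [Matrix.mul_apply, Fin.sum_univ_two, Matrix.conjTranspose_apply,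
    Matrix.one_apply, Matrix.star_eq_conjTranspose] at h00 h01
  have hdet : C.det * (starRingEnd ℂ) C.det = 1 := by
    have := congrArg Matrix.det h
    rw [Matrix.det_mul, Matrix.det_one, Matrix.star_eq_conjTranspose,
      Matrix.det_conjTranspose] at this
    rw [mul_comm]
    exact this
  refine ⟨by linear_combination h00, ?_, hdet⟩
  rw [Matrix.det_fin_two]
  linear_combination (-(C 0 1)) * h00 + C 0 0 * h01

lemma pows17 (u v : ℂ) (huv : u * v = 1) (m n : ℤ) :
    u ^ (2 * m - n + 1) = (u ^ m) ^ 2 * v ^ n * u ∧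
    u ^ (n - 2 * m + 1) = u ^ n * (v ^ m) ^ 2 * u ∧
    u ^ (-n + 1) = v ^ n * u ∧
    u ^ (2 * m - n) = (u ^ m) ^ 2 * v ^ n ∧
    u ^ (n - 2 * m) = u ^ n * (v ^ m) ^ 2 ∧
    u ^ (-n) = v ^ n ∧
    u ^ (n + 1) = u ^ n * u := by
  have hu0 : u ≠ 0 := left_ne_zero_of_mul_eq_one huv
  have hv : v = u⁻¹ := eq_inv_of_mul_eq_one_left (by rw [mul_comm]; exact huv)
  have key : ∀ k : ℤ, u ^ (-k) = v ^ k := fun k => by rw [hv]; exact (_root_.inv_zpow' u k).symm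
  refine ⟨?_, ?_, ?_, ?_, ?_, key n, zpow_add_one₀ hu0 n⟩
  · rw [show 2 * m - n + 1 = m + m + -n + 1 by ring, zpow_add_one₀ hu0, zpow_add₀ hu0,
      zpow_add₀ hu0, key, sq]
  · rw [show n - 2 * m + 1 = n + -m + -m + 1 by ring, zpow_add_one₀ hu0, zpow_add₀ hu0,
      zpow_add₀ hu0, key, sq]
    ring
  · rw [zpow_add_one₀ hu0, key]
  · rw [show 2 * m - n = m + m + -n by ring, zpow_add₀ hu0, zpow_add₀ hu0, key, sq]
  · rw [show n - 2 * m = n + -m + -m by ring, zpow_add₀ hu0, zpow_add₀ hu0, key, sq]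
    ring

lemma key17 (z w Z0 W0 Z1 W1 a0 c0 ca0 cc0 a1 c1 ca1 cc1 D1 cD1 a2 c2 ca2 cc2 D2 cD2 : ℂ)
    (hzw : z * w = 1) (h0 : Z0 * W0 = 1) (h1 : Z1 * W1 = 1)
    (u0 : a0 * ca0 + c0 * cc0 = 1) (u1 : a1 * ca1 + c1 * cc1 = 1)
    (u2 : a2 * ca2 + c2 * cc2 = 1) (e1 : D1 * cD1 = 1) (e2 : D2 * cD2 = 1) :
    (Z1 * z - c1 * (-cc2 * D2) * (Z0 ^ 2 * W1 * z) - c0 * (-cc1 * D1) * (Z1 * W0 ^ 2 * z)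
        - c0 * (-cc2 * D2) * D1 * (W1 * z))
      * (W1 * w - cc1 * (-c2 * cD2) * (W0 ^ 2 * Z1 * w) - cc0 * (-c1 * cD1) * (W1 * Z0 ^ 2 * w)
        - cc0 * (-c2 * cD2) * cD1 * (Z1 * w))
    = a0 * a1 * a2 * (ca0 * ca1 * ca2)
      + (c2 * Z1 + c1 * D2 * (Z0 ^ 2 * W1) - c0 * (-cc1 * D1) * c2 * (Z1 * W0 ^ 2)
          + c0 * D1 * D2 * W1)
        * (cc2 * W1 + cc1 * cD2 * (W0 ^ 2 * Z1) - cc0 * (-c1 * cD1) * cc2 * (W1 * Z0 ^ 2)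
          + cc0 * cD1 * cD2 * Z1) := by
  linear_combination (W1^2*c0*D1*cc2*D2 + Z1*W1 + Z1*W1*c0*cc0*D1*cD1*c2*cc2*D2*cD2 + Z1^2*cc0*cD1*c2*cD2 + W0^2*Z1*W1*c0*cc1*D1 + W0^2*Z1*W1*c0*cc1*D1*c2*cc2*D2*cD2 + W0^2*Z1^2*cc1*c2*cD2 + W0^2*Z1^2*c0*cc0*cc1*D1*cD1*c2*cD2 + W0^4*Z1^2*c0*cc1^2*D1*c2*cD2 + Z0^2*W1^2*c1*cc2*D2 + Z0^2*W1^2*c0*cc0*c1*D1*cD1*cc2*D2 + Z0^2*Z1*W1*cc0*c1*cD1 + Z0^2*Z1*W1*cc0*c1*cD1*c2*cc2*D2*cD2 + Z0^2*W0^2*Z1*W1*c1*cc1*c2*cc2*D2*cD2 + Z0^2*W0^2*Z1*W1*c0*cc0*c1*cc1*D1*cD1 + Z0^4*W1^2*cc0*c1^2*cD1*cc2*D2) * hzw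
 + ((-1)*Z1*W1*c1*cc1*D2*cD2 + Z1*W1*c1*cc1*c2*cc2*D2*cD2 + Z1*W1*c0*cc0*c1*cc1*D1*cD1 + (-1)*Z1*W1*c0*cc0*c1*cc1*D1*cD1*c2*cc2 + (-1)*Z0*W0*Z1*W1*c1*cc1*D2*cD2 + Z0*W0*Z1*W1*c1*cc1*c2*cc2*D2*cD2 + Z0*W0*Z1*W1*c0*cc0*c1*cc1*D1*cD1 + (-1)*Z0*W0*Z1*W1*c0*cc0*c1*cc1*D1*cD1*c2*cc2) * h0
 + ((1) + (-1)*c2*cc2 + (-1)*c1*cc1*D2*cD2 + c1*cc1*c2*cc2*D2*cD2 + (-1)*c0*cc0*D1*cD1*D2*cD2 + c0*cc0*D1*cD1*c2*cc2*D2*cD2 + c0*cc0*c1*cc1*D1*cD1 + (-1)*c0*cc0*c1*cc1*D1*cD1*c2*cc2 + W0^2*c0*cc1*D1 + (-1)*W0^2*c0*cc1*D1*D2*cD2 + (-1)*W0^2*c0*cc1*D1*c2*cc2 + W0^2*c0*cc1*D1*c2*cc2*D2*cD2 + Z0^2*cc0*c1*cD1 + (-1)*Z0^2*cc0*c1*cD1*D2*cD2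 + (-1)*Z0^2*cc0*c1*cD1*c2*cc2 + Z0^2*cc0*c1*cD1*c2*cc2*D2*cD2) * h1
 + ((-1)*c0*cc0*D2*cD2 + c0*cc0*c2*cc2*D2*cD2 + c0*cc0*c1*cc1 + (-1)*c0*cc0*c1*cc1*c2*cc2) * e1
 + ((-1)*c1*cc1 + c1*cc1*c2*cc2 + (-1)*c0*cc0 + c0*cc0*c2*cc2 + (-1)*W0^2*c0*cc1*D1 + W0^2*c0*cc1*D1*c2*cc2 + (-1)*Z0^2*cc0*c1*cD1 + Z0^2*cc0*c1*cD1*c2*cc2) * e2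
 + ((-1)*a1*ca1*a2*ca2) * u0
 + ((-1)*a2*ca2 + c0*cc0*a2*ca2) * u1
 + ((-1) + c1*cc1 + c0*cc0 + (-1)*c0*cc0*c1*cc1) * u2


/-- Unitarity identity for the triple barrier amplitudes on the unit circle:
`|𝚊(z)|² = |C⁰₁₁C¹₁₁C²₁₁|² + |𝚋(z)|²`. -/
theorem stmt17 (z : ℂ) (hz : ‖z‖ = 1) (x₀ x₁ : ℤ) (h0 : 0 < x₀) (h01 : x₀ < x₁)
    (C0 C1 C2 : Matrix (Fin 2) (Fin 2) ℂ)
    (hC0 : C0 ∈ Matrix.unitaryGroup (Fin 2) ℂ) (hC1 : C1 ∈ Matrix.unitaryGroup (Fin 2) ℂ)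
    (hC2 : C2 ∈ Matrix.unitaryGroup (Fin 2) ℂ) :
    ‖(z ^ (x₁ + 1) - C1 1 0 * C2 0 1 * z ^ (2 * x₀ - x₁ + 1)
          - C0 1 0 * C1 0 1 * z ^ (x₁ - 2 * x₀ + 1)
          - C0 1 0 * C2 0 1 * C1.det * z ^ (-x₁ + 1))‖ ^ 2
      = ‖(C0 0 0 * C1 0 0 * C2 0 0)‖ ^ 2
        + ‖(C2 1 0 * z ^ x₁ + C1 1 0 * C2.det * z ^ (2 * x₀ - x₁)
              - C0 1 0 * C1 0 1 * C2 1 0 * z ^ (x₁ - 2 * x₀)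
              + C0 1 0 * C1.det * C2.det * z ^ (-x₁))‖ ^ 2 := by
  have habs : ∀ A P B : ℂ,
      A * (starRingEnd ℂ) A = P * (starRingEnd ℂ) P + B * (starRingEnd ℂ) B →
      ‖A‖ ^ 2 = ‖P‖ ^ 2 + ‖B‖ ^ 2 := by
    intro A P B h
    rw [Complex.sq_norm, Complex.sq_norm, Complex.sq_norm]
    have h2 : ((Complex.normSq A : ℂ)) = (Complex.normSq P : ℂ) + (Complex.normSq B : ℂ) := by
      rw [← Complex.mul_conj, ← Complex.mul_conj, ← Complex.mul_conj]; exact h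
    exact_mod_cast h2
  apply habs
  have hzw : z * (starRingEnd ℂ) z = 1 := by
    rw [Complex.mul_conj]
    norm_cast
    rw [← Complex.sq_norm, hz, one_pow]
  have hwz : (starRingEnd ℂ) z * z = 1 := by rw [mul_comm]; exact hzw
  obtain ⟨u0, hb0, e0⟩ := unit_facts17 C0 hC0
  obtain ⟨u1, hb1, e1⟩ := unit_facts17 C1 hC1
  obtain ⟨u2, hb2, e2⟩ := unit_facts17 C2 hC2
  have hb1c : (starRingEnd ℂ) (C1 0 1) = -(C1 1 0) * (starRingEnd ℂ) C1.det := by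
    rw [hb1, _root_.map_mul, map_neg, Complex.conj_conj]
  have hb2c : (starRingEnd ℂ) (C2 0 1) = -(C2 1 0) * (starRingEnd ℂ) C2.det := by
    rw [hb2, _root_.map_mul, map_neg, Complex.conj_conj]
  obtain ⟨P2, P3, P4, Q2, Q3, Q4, P1⟩ := pows17 z ((starRingEnd ℂ) z) hzw x₀ x₁
  obtain ⟨P2', P3', P4', Q2', Q3', Q4', P1'⟩ := pows17 ((starRingEnd ℂ) z) z hwz x₀ x₁
  have h0' : z ^ x₀ * ((starRingEnd ℂ) z) ^ x₀ = 1 := by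
    rw [← mul_zpow, hzw, _root_.one_zpow]
  have h1' : z ^ x₁ * ((starRingEnd ℂ) z) ^ x₁ = 1 := by
    rw [← mul_zpow, hzw, _root_.one_zpow]
  simp only [map_sub, map_add, _root_.map_mul, map_zpow₀]
  rw [hb1c, hb2c, hb1, hb2, P1, P2, P3, P4, Q2, Q3, Q4, P1', P2', P3', P4', Q2', Q3', Q4']
  linear_combination key17 z ((starRingEnd ℂ) z) (z ^ x₀) (((starRingEnd ℂ) z) ^ x₀)
    (z ^ x₁) (((starRingEnd ℂ) z) ^ x₁) (C0 0 0) (C0 1 0) ((starRingEnd ℂ) (C0 0 0))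
    ((starRingEnd ℂ) (C0 1 0)) (C1 0 0) (C1 1 0) ((starRingEnd ℂ) (C1 0 0))
    ((starRingEnd ℂ) (C1 1 0)) C1.det ((starRingEnd ℂ) C1.det) (C2 0 0) (C2 1 0)
    ((starRingEnd ℂ) (C2 0 0)) ((starRingEnd ℂ) (C2 1 0)) C2.det ((starRingEnd ℂ) C2.det)
    hzw h0' h1' u0 u1 u2 e1 e2
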